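/- (Soundness of SDI w.r.t. LK1 on the initial domain) Under the full axiomatisation, if σ → ⊢^{d₀} Γ → σ' is derivable in SDI and the empty instantiation is compatible with σ', then ⊢ Γ is derivable in LK1. In particular, when P is the predicate 'being satisfiable', derivability of σ → ⊢^{d₀} Γ → σ' in SDI implies derivability of ⊢ Γ in LK1. -/

import Mathlib

/-- First-order terms: de Bruijn bound variables, eigenvariables,
meta-variables, and function symbols applied to argument lists. -/
inductive Tm : Type
| bv : ℕ → Tm
| ev : ℕ → Tm
| mv : ℕ → Tm
| fn : ℕ → List Tm → Tm

/-- Substitute the term `u` for the bound variable of index `k`. -/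
def Tm.bsub (k : ℕ) (u : Tm) : Tm → Tm
| bv i => if i = k then u else bv i
| ev i => ev i
| mv i => mv i
| fn f ts => fn f (ts.attach.map (fun ⟨t, _⟩ => Tm.bsub k u t))
termination_by t => sizeOf t
decreasing_by simp_wf; have := List.sizeOf_lt_of_mem ‹_›; omega

/-- Apply an instantiation of the meta-variables to a term. -/
def Tm.msub (ρ : ℕ → Tm) : Tm → Tm
| bv i => bv i
| ev i => ev i
| mv i => ρ i
| fn f ts => fn f (ts.attach.map (fun ⟨t, _⟩ => Tm.msub ρ t))
termination_by t => sizeOf t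
decreasing_by simp_wf; have := List.sizeOf_lt_of_mem ‹_›; omega

/-- Ground terms: built from eigenvariables and function symbols only. -/
inductive Tm.Ground : Tm → Prop
| ev (i : ℕ) : Ground (ev i)
| fn (f : ℕ) (ts : List Tm) : (∀ t ∈ ts, Ground t) → Ground (fn f ts)

/-- All eigenvariables of the term are `< ke` and all meta-variables are `< kx`
(and no de Bruijn variable occurs: the term is locally closed). -/
inductive Tm.VarsBelow (ke kx : ℕ) : Tm → Prop
| ev (i : ℕ) : i < ke → VarsBelow ke kx (ev i)
| mv (i : ℕ) : i < kx → VarsBelow ke kx (mv i)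
| fn (f : ℕ) (ts : List Tm) : (∀ t ∈ ts, VarsBelow ke kx t) → VarsBelow ke kx (fn f ts)

/-- The eigenvariable `y` occurs in the term. -/
inductive Tm.HasEv (y : ℕ) : Tm → Prop
| ev : HasEv y (ev y)
| fn (f : ℕ) (ts : List Tm) (t : Tm) : t ∈ ts → HasEv y t → HasEv y (fn f ts)

/-- Literals: a polarity, a predicate symbol, and a list of arguments. -/
abbrev Lit : Type := Bool × ℕ × List Tm

/-- Apply an instantiation of the meta-variables to a literal. -/
def Lit.msub (ρ : ℕ → Tm) (l : Lit) : Lit := (l.1, l.2.1, l.2.2.map (Tm.msub ρ))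

/-- First-order formulae in negation normal form. -/
inductive Fm : Type
| lit : Bool → ℕ → List Tm → Fm
| conj : Fm → Fm → Fm
| disj : Fm → Fm → Fm
| all : Fm → Fm
| ex : Fm → Fm

def Fm.bsub (k : ℕ) (u : Tm) : Fm → Fm
| lit b p ts => lit b p (ts.map (Tm.bsub k u))
| conj A B => conj (A.bsub k u) (B.bsub k u)
| disj A B => disj (A.bsub k u) (B.bsub k u)
| all A => all (A.bsub (k+1) u)
| ex A => ex (A.bsub (k+1) u)

/-- `A.opn u` is `A[x := u]`: the body of a quantifier, opened with the term `u`. -/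
def Fm.opn (u : Tm) (A : Fm) : Fm := A.bsub 0 u

/-- Apply an instantiation of the meta-variables to a formula. -/
def Fm.msub (ρ : ℕ → Tm) : Fm → Fm
| lit b p ts => lit b p (ts.map (Tm.msub ρ))
| conj A B => conj (A.msub ρ) (B.msub ρ)
| disj A B => disj (A.msub ρ) (B.msub ρ)
| all A => all (A.msub ρ)
| ex A => ex (A.msub ρ)

/-- All free variables of the formula are declared: eigenvariables `< ke`,
meta-variables `< kx`. -/
inductive Fm.VarsBelow (ke kx : ℕ) : Fm → Prop
| lit (b : Bool) (p : ℕ) (ts : List Tm) : (∀ t ∈ ts, Tm.VarsBelow ke kx t) → VarsBelow ke kx (lit b p ts)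
| conj {A B} : VarsBelow ke kx A → VarsBelow ke kx B → VarsBelow ke kx (conj A B)
| disj {A B} : VarsBelow ke kx A → VarsBelow ke kx B → VarsBelow ke kx (disj A B)
| all {A} : VarsBelow ke kx A → VarsBelow ke kx (all A)
| ex {A} : VarsBelow ke kx A → VarsBelow ke kx (ex A)

/-- The eigenvariable `y` occurs (free) in the formula. -/
inductive Fm.HasEv (y : ℕ) : Fm → Prop
| lit (b : Bool) (p : ℕ) (ts : List Tm) (t : Tm) : t ∈ ts → Tm.HasEv y t → HasEv y (lit b p ts)
| conjl {A B} : HasEv y A → HasEv y (conj A B)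
| conjr {A B} : HasEv y B → HasEv y (conj A B)
| disjl {A B} : HasEv y A → HasEv y (disj A B)
| disjr {A B} : HasEv y B → HasEv y (disj A B)
| all {A} : HasEv y A → HasEv y (all A)
| ex {A} : HasEv y A → HasEv y (ex A)

/-- The set of literals of a context. -/
def lits (Γ : Multiset Fm) : Set Lit := {l | Fm.lit l.1 l.2.1 l.2.2 ∈ Γ}

/-- Domains: the initial domain, extended by fresh eigenvariables and
fresh meta-variables. -/
inductive Dom : Type
| init : Dom
| addE : Dom → Dom
| addX : Dom → Dom

/-- Number of declared eigenvariables. -/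
def Dom.numE : Dom → ℕ
| init => 0
| addE d => d.numE + 1
| addX d => d.numE

/-- Number of declared meta-variables. -/
def Dom.numX : Dom → ℕ
| init => 0
| addE d => d.numX
| addX d => d.numX + 1

/-- A term of domain `d` that is ground: only eigenvariables of `d`. -/
def TmOfDom (d : Dom) (t : Tm) : Prop := Tm.VarsBelow d.numE 0 t

/-- A formula of domain `d`. -/
def FmOfDom (d : Dom) (A : Fm) : Prop := Fm.VarsBelow d.numE d.numX A

/-- A context of domain `d`. -/
def CtxOfDom (d : Dom) (Γ : Multiset Fm) : Prop := ∀ A ∈ Γ, FmOfDom d A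

/-- Instantiations of domain `d`: each meta-variable declared in `d` is mapped
to a ground term over the eigenvariables declared before it. -/
def InstOK : Dom → (ℕ → Tm) → Prop
| .init, _ => True
| .addE d, ρ => InstOK d ρ
| .addX d, ρ => InstOK d ρ ∧ TmOfDom d (ρ d.numX)

/-- Extend an instantiation with the term `t` for the meta-variable `n`. -/
def extend (ρ : ℕ → Tm) (n : ℕ) (t : Tm) : ℕ → Tm := fun i => if i = n then t else ρ i

/-- The empty instantiation (of the initial domain, which declares no
meta-variables, so that the values below are irrelevant). -/
def emptyInst : ℕ → Tm := fun _ => Tm.fn 0 []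
/-- The ground one-sided sequent calculus `LK1` modulo the theory given by the
ground validity predicate `models` on sets of ground literals. -/
inductive LK1 (models : Set Lit → Prop) : Multiset Fm → Prop
| ax (Γ : Multiset Fm) : models (lits Γ) → LK1 models Γ
| conj {Γ A B} : LK1 models (A ::ₘ Γ) → LK1 models (B ::ₘ Γ) →
    LK1 models (Fm.conj A B ::ₘ Γ)
| disj {Γ A B} : LK1 models (A ::ₘ B ::ₘ Γ) → LK1 models (Fm.disj A B ::ₘ Γ)
| ex {Γ A} (t : Tm) : t.Ground →
    LK1 models (Fm.opn t A ::ₘ Fm.ex A ::ₘ Γ) → LK1 models (Fm.ex A ::ₘ Γ)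
| all {Γ A} (y : ℕ) : (∀ B ∈ (Fm.all A ::ₘ Γ), ¬ Fm.HasEv y B) →
    LK1 models (Fm.opn (Tm.ev y) A ::ₘ Γ) → LK1 models (Fm.all A ::ₘ Γ)
/-- The constraint-producing sequent calculus `DI`, parameterised by the
constraint sets `Psi` (indexed by the number of declared meta-variables),
the meet operator, the projections, and the constraint-producing predicate
`bbc` of the background reasoner. `DI d Γ σ` is the sequent `⊢^d Γ → σ`. -/
inductive DI (Psi : ℕ → Type) (meet : ∀ {n}, Psi n → Psi n → Psi n)
    (proj : ∀ {n}, Psi (n+1) → Psi n)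
    (bbc : ∀ d : Dom, Set Lit → Psi d.numX → Prop) :
    ∀ d : Dom, Multiset Fm → Psi d.numX → Prop
| ax {d : Dom} (Γ : Multiset Fm) (σ : Psi d.numX) :
    bbc d (lits Γ) σ → DI Psi meet proj bbc d Γ σ
| conj {d : Dom} {Γ A B} {σ σ' : Psi d.numX} :
    DI Psi meet proj bbc d (A ::ₘ Γ) σ → DI Psi meet proj bbc d (B ::ₘ Γ) σ' →
    DI Psi meet proj bbc d (Fm.conj A B ::ₘ Γ) (meet σ σ')
| disj {d : Dom} {Γ A B} {σ : Psi d.numX} :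
    DI Psi meet proj bbc d (A ::ₘ B ::ₘ Γ) σ →
    DI Psi meet proj bbc d (Fm.disj A B ::ₘ Γ) σ
| ex {d : Dom} {Γ A} {σ : Psi (d.numX + 1)} :
    DI Psi meet proj bbc d.addX (Fm.opn (Tm.mv d.numX) A ::ₘ Fm.ex A ::ₘ Γ) σ →
    DI Psi meet proj bbc d (Fm.ex A ::ₘ Γ) (proj σ)
| all {d : Dom} {Γ A} {σ : Psi d.numX} :
    DI Psi meet proj bbc d.addE (Fm.opn (Tm.ev d.numE) A ::ₘ Γ) σ →
    DI Psi meet proj bbc d (Fm.all A ::ₘ Γ) σ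
/-- The constraint-refining sequent calculus `SDI`, with sequential treatment
of conjunctive branching (in either order), parameterised by the lift
constraint structure and the constraint-refining predicate `bbr`.
`SDI d σ Γ σ'` is the sequent `σ → ⊢^d Γ → σ'`. -/
inductive SDI (Psi : ℕ → Type) (proj : ∀ {n}, Psi (n+1) → Psi n)
    (lift : ∀ {n}, Psi n → Psi (n+1))
    (bbr : ∀ d : Dom, Psi d.numX → Set Lit → Psi d.numX → Prop) :
    ∀ d : Dom, Psi d.numX → Multiset Fm → Psi d.numX → Prop
| ax {d : Dom} (σ : Psi d.numX) (Γ : Multiset Fm) (σ' : Psi d.numX) :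
    bbr d σ (lits Γ) σ' → SDI Psi proj lift bbr d σ Γ σ'
| conj0 {d : Dom} {Γ A B} {σ σ'' σ' : Psi d.numX} :
    SDI Psi proj lift bbr d σ (A ::ₘ Γ) σ'' →
    SDI Psi proj lift bbr d σ'' (B ::ₘ Γ) σ' →
    SDI Psi proj lift bbr d σ (Fm.conj A B ::ₘ Γ) σ'
| conj1 {d : Dom} {Γ A B} {σ σ'' σ' : Psi d.numX} :
    SDI Psi proj lift bbr d σ (B ::ₘ Γ) σ'' →
    SDI Psi proj lift bbr d σ'' (A ::ₘ Γ) σ' →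
    SDI Psi proj lift bbr d σ (Fm.conj A B ::ₘ Γ) σ'
| disj {d : Dom} {Γ A B} {σ σ' : Psi d.numX} :
    SDI Psi proj lift bbr d σ (A ::ₘ B ::ₘ Γ) σ' →
    SDI Psi proj lift bbr d σ (Fm.disj A B ::ₘ Γ) σ'
| ex {d : Dom} {Γ A} {σ : Psi d.numX} {σ' : Psi (d.numX + 1)} :
    SDI Psi proj lift bbr d.addX (lift σ) (Fm.opn (Tm.mv d.numX) A ::ₘ Fm.ex A ::ₘ Γ) σ' →
    SDI Psi proj lift bbr d σ (Fm.ex A ::ₘ Γ) (proj σ')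
| all {d : Dom} {Γ A} {σ σ' : Psi d.numX} :
    SDI Psi proj lift bbr d.addE σ (Fm.opn (Tm.ev d.numE) A ::ₘ Γ) σ' →
    SDI Psi proj lift bbr d σ (Fm.all A ::ₘ Γ) σ'

/-- The compatibility-based pre-order on `Ψ_d` (over the instantiations of
domain `d`). -/
def preD (Psi : ℕ → Type) (eps : ∀ {n}, (ℕ → Tm) → Psi n → Prop)
    (d : Dom) (σ σ' : Psi d.numX) : Prop :=
  ∀ ρ : ℕ → Tm, InstOK d ρ → eps ρ σ → eps ρ σ'

/-- The equivalence generated by the compatibility-based pre-order. -/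
def equD (Psi : ℕ → Type) (eps : ∀ {n}, (ℕ → Tm) → Psi n → Prop)
    (d : Dom) (σ σ' : Psi d.numX) : Prop :=
  preD Psi (fun ρ τ => eps ρ τ) d σ σ' ∧ preD Psi (fun ρ τ => eps ρ τ) d σ' σ
/-! ### Auxiliary lemmas -/

namespace Tm

lemma bsub_ev (k : ℕ) (u : Tm) (i : ℕ) : Tm.bsub k u (ev i) = ev i := by
  rw [Tm.bsub.eq_def]

lemma bsub_mv (k : ℕ) (u : Tm) (i : ℕ) : Tm.bsub k u (mv i) = mv i := by
  rw [Tm.bsub.eq_def]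

lemma bsub_fn (k : ℕ) (u : Tm) (f : ℕ) (ts : List Tm) :
    Tm.bsub k u (fn f ts) = fn f (ts.attach.map (fun x => Tm.bsub k u x.1)) := by
  rw [Tm.bsub.eq_def]

lemma msub_ev (ρ : ℕ → Tm) (i : ℕ) : Tm.msub ρ (ev i) = ev i := by
  rw [Tm.msub.eq_def]

lemma msub_mv (ρ : ℕ → Tm) (i : ℕ) : Tm.msub ρ (mv i) = ρ i := by
  rw [Tm.msub.eq_def]

lemma msub_fn (ρ : ℕ → Tm) (f : ℕ) (ts : List Tm) :
    Tm.msub ρ (fn f ts) = fn f (ts.attach.map (fun x => Tm.msub ρ x.1)) := by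
  rw [Tm.msub.eq_def]

lemma varsBelow_mono {ke kx ke' kx' : ℕ} {t : Tm} (h : VarsBelow ke kx t)
    (he : ke ≤ ke') (hx : kx ≤ kx') : VarsBelow ke' kx' t := by
  induction h with
  | ev i h => exact .ev i (lt_of_lt_of_le h he)
  | mv i h => exact .mv i (lt_of_lt_of_le h hx)
  | fn f ts h ih => exact .fn f ts ih

lemma bsub_id {ke kx : ℕ} {t : Tm} (h : VarsBelow ke kx t) (k : ℕ) (u : Tm) :
    Tm.bsub k u t = t := by
  induction h with
  | ev i h => exact bsub_ev k u i
  | mv i h => exact bsub_mv k u i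
  | fn f ts h ih =>
    rw [bsub_fn]
    congr 1
    calc ts.attach.map (fun x => Tm.bsub k u x.1)
        = ts.attach.map (fun x => x.1) := List.map_congr_left (fun x _ => ih x.1 x.2)
      _ = ts := List.attach_map_subtype_val ts

lemma msub_congr {ke kx : ℕ} {t : Tm} (h : VarsBelow ke kx t) {ρ ρ' : ℕ → Tm}
    (hρ : ∀ i < kx, ρ i = ρ' i) : t.msub ρ = t.msub ρ' := by
  induction h with
  | ev i h => rw [msub_ev, msub_ev]
  | mv i h => rw [msub_mv, msub_mv]; exact hρ i h
  | fn f ts h ih =>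
    rw [msub_fn, msub_fn]
    congr 1
    exact List.map_congr_left (fun x _ => ih x.1 x.2)

lemma msub_varsBelow {ke kx : ℕ} {t : Tm} (h : VarsBelow ke kx t) {ρ : ℕ → Tm}
    (hρ : ∀ i < kx, VarsBelow ke 0 (ρ i)) : VarsBelow ke 0 (t.msub ρ) := by
  induction h with
  | ev i h => rw [msub_ev]; exact .ev i h
  | mv i h => rw [msub_mv]; exact hρ i h
  | fn f ts h ih =>
    rw [msub_fn]
    refine .fn f _ ?_
    intro t' ht'
    rcases List.mem_map.1 ht' with ⟨x, hx, rfl⟩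
    exact ih x.1 x.2

lemma ground_of_varsBelow {ke : ℕ} {t : Tm} (h : VarsBelow ke 0 t) : t.Ground := by
  induction h with
  | ev i h => exact .ev i
  | mv i h => omega
  | fn f ts h ih => exact .fn f ts ih

lemma hasEv_lt {y : ℕ} {t : Tm} (h : HasEv y t) :
    ∀ {ke kx : ℕ}, VarsBelow ke kx t → y < ke := by
  induction h with
  | ev => intro ke kx hv; cases hv; assumption
  | fn f ts t ht _ ih =>
    intro ke kx hv
    cases hv with
    | fn _ _ h => exact ih (h t ht)

lemma msub_id {ke : ℕ} {t : Tm} (h : VarsBelow ke 0 t) (ρ : ℕ → Tm) :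
    t.msub ρ = t := by
  induction h with
  | ev i h => rw [msub_ev]
  | mv i h => omega
  | fn f ts h ih =>
    rw [msub_fn]
    congr 1
    calc ts.attach.map (fun x => Tm.msub ρ x.1)
        = ts.attach.map (fun x => x.1) := List.map_congr_left (fun x _ => ih x.1 x.2)
      _ = ts := List.attach_map_subtype_val ts

end Tm
namespace Fm

lemma varsBelow_mono {ke kx ke' kx' : ℕ} {A : Fm} (h : VarsBelow ke kx A)
    (he : ke ≤ ke') (hx : kx ≤ kx') : VarsBelow ke' kx' A := by
  induction h with
  | lit b p ts h => exact .lit b p ts (fun t ht => Tm.varsBelow_mono (h t ht) he hx)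
  | conj _ _ ih1 ih2 => exact .conj ih1 ih2
  | disj _ _ ih1 ih2 => exact .disj ih1 ih2
  | all _ ih => exact .all ih
  | ex _ ih => exact .ex ih

lemma bsub_id {ke kx : ℕ} {A : Fm} (h : VarsBelow ke kx A) (k : ℕ) (u : Tm) :
    Fm.bsub k u A = A := by
  induction h generalizing k with
  | lit b p ts h =>
    rw [Fm.bsub]
    congr 1
    exact (List.map_congr_left (fun t ht => Tm.bsub_id (h t ht) k u)).trans (List.map_id ts)
  | conj _ _ ih1 ih2 => rw [Fm.bsub]; rw [ih1, ih2]
  | disj _ _ ih1 ih2 => rw [Fm.bsub]; rw [ih1, ih2]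
  | all _ ih => rw [Fm.bsub]; rw [ih]
  | ex _ ih => rw [Fm.bsub]; rw [ih]

lemma opn_id {ke kx : ℕ} {A : Fm} (h : VarsBelow ke kx A) (u : Tm) :
    Fm.opn u A = A := bsub_id h 0 u

lemma msub_congr {ke kx : ℕ} {A : Fm} (h : VarsBelow ke kx A) {ρ ρ' : ℕ → Tm}
    (hρ : ∀ i < kx, ρ i = ρ' i) : A.msub ρ = A.msub ρ' := by
  induction h with
  | lit b p ts h =>
    rw [Fm.msub, Fm.msub]
    congr 1
    exact List.map_congr_left (fun t ht => Tm.msub_congr (h t ht) hρ)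
  | conj _ _ ih1 ih2 => rw [Fm.msub, Fm.msub]; rw [ih1, ih2]
  | disj _ _ ih1 ih2 => rw [Fm.msub, Fm.msub]; rw [ih1, ih2]
  | all _ ih => rw [Fm.msub, Fm.msub]; rw [ih]
  | ex _ ih => rw [Fm.msub, Fm.msub]; rw [ih]

lemma msub_varsBelow {ke kx : ℕ} {A : Fm} (h : VarsBelow ke kx A) {ρ : ℕ → Tm}
    (hρ : ∀ i < kx, Tm.VarsBelow ke 0 (ρ i)) : VarsBelow ke 0 (A.msub ρ) := by
  induction h with
  | lit b p ts h =>
    rw [Fm.msub]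
    refine .lit b p _ ?_
    intro t' ht'
    rcases List.mem_map.1 ht' with ⟨t, ht, rfl⟩
    exact Tm.msub_varsBelow (h t ht) hρ
  | conj _ _ ih1 ih2 => exact .conj ih1 ih2
  | disj _ _ ih1 ih2 => exact .disj ih1 ih2
  | all _ ih => exact .all ih
  | ex _ ih => exact .ex ih

lemma hasEv_lt {y : ℕ} {A : Fm} (h : HasEv y A) :
    ∀ {ke kx : ℕ}, VarsBelow ke kx A → y < ke := by
  induction h with
  | lit b p ts t ht he =>
    intro ke kx hv
    cases hv with
    | lit _ _ _ h => exact Tm.hasEv_lt he (h t ht)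
  | conjl _ ih => intro ke kx hv; cases hv with | conj h1 h2 => exact ih h1
  | conjr _ ih => intro ke kx hv; cases hv with | conj h1 h2 => exact ih h2
  | disjl _ ih => intro ke kx hv; cases hv with | disj h1 h2 => exact ih h1
  | disjr _ ih => intro ke kx hv; cases hv with | disj h1 h2 => exact ih h2
  | all _ ih => intro ke kx hv; cases hv with | all h1 => exact ih h1
  | ex _ ih => intro ke kx hv; cases hv with | ex h1 => exact ih h1

lemma msub_id {ke : ℕ} {A : Fm} (h : VarsBelow ke 0 A) (ρ : ℕ → Tm) :
    A.msub ρ = A := by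
  induction h with
  | lit b p ts h =>
    rw [Fm.msub]
    congr 1
    exact (List.map_congr_left (fun t ht => Tm.msub_id (h t ht) ρ)).trans (List.map_id ts)
  | conj _ _ ih1 ih2 => rw [Fm.msub]; rw [ih1, ih2]
  | disj _ _ ih1 ih2 => rw [Fm.msub]; rw [ih1, ih2]
  | all _ ih => rw [Fm.msub]; rw [ih]
  | ex _ ih => rw [Fm.msub]; rw [ih]

end Fm

/-- `lits` commutes with `msub`. -/
lemma lits_map (ρ : ℕ → Tm) (Γ : Multiset Fm) :
    lits (Γ.map (Fm.msub ρ)) = Lit.msub ρ '' lits Γ := by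
  ext l
  obtain ⟨b, p, ts⟩ := l
  simp only [lits, Set.mem_setOf_eq, Set.mem_image, Multiset.mem_map]
  constructor
  · rintro ⟨B, hB, hEq⟩
    cases B with
    | lit b' p' ts' =>
      rw [Fm.msub] at hEq
      cases hEq
      exact ⟨(b, p, ts'), hB, rfl⟩
    | conj A B => rw [Fm.msub] at hEq; cases hEq
    | disj A B => rw [Fm.msub] at hEq; cases hEq
    | all A => rw [Fm.msub] at hEq; cases hEq
    | ex A => rw [Fm.msub] at hEq; cases hEq
  · rintro ⟨⟨b', p', ts'⟩, hmem, hEq⟩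
    cases hEq
    exact ⟨Fm.lit b' p' ts', hmem, rfl⟩

/-- `InstOK` only depends on the values at declared meta-variables. -/
lemma instOK_congr : ∀ (d : Dom) {ρ ρ' : ℕ → Tm},
    (∀ i < d.numX, ρ i = ρ' i) → InstOK d ρ → InstOK d ρ'
  | .init, _, _, _, _ => trivial
  | .addE d, ρ, ρ', h, hok => instOK_congr d h hok
  | .addX d, ρ, ρ', h, hok =>
    ⟨instOK_congr d (fun i hi => h i (Nat.lt_succ_of_lt hi)) hok.1,
      h d.numX (Nat.lt_succ_self _) ▸ hok.2⟩

/-- The values of an instantiation at declared meta-variables are ground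
terms over the declared eigenvariables. -/
lemma instOK_varsBelow : ∀ (d : Dom) {ρ : ℕ → Tm}, InstOK d ρ →
    ∀ i < d.numX, Tm.VarsBelow d.numE 0 (ρ i)
  | .init, _, _, _, hi => absurd hi (by simp [Dom.numX])
  | .addE d, ρ, hok, i, hi =>
      Tm.varsBelow_mono (instOK_varsBelow d hok i hi) (Nat.le_succ _) le_rfl
  | .addX d, ρ, hok, i, hi => by
      rcases Nat.lt_succ_iff_lt_or_eq.1 hi with hi' | rfl
      · exact instOK_varsBelow d hok.1 i hi'
      · exact hok.2

/-- Soundness of `SDI` w.r.t. `LK1` on the initial domain, under the full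
axiomatisation (Aπ, Aε, A∧, Apg, A↑, P1, P2, A1, A2, with the pre-order taken
to be the compatibility-based one): if `σ → ⊢^{d₀} Γ → σ'` is derivable in
`SDI` and the empty instantiation is compatible with `σ'`, then `⊢ Γ` is
derivable in `LK1`; and in particular, when `P` is the predicate 'being
satisfiable', derivability of `σ → ⊢^{d₀} Γ → σ'` in `SDI` implies
derivability of `⊢ Γ` in `LK1`. -/
theorem SDI_sound_LK1_initial (Psi : ℕ → Type) (meet : ∀ {n}, Psi n → Psi n → Psi n)
    (proj : ∀ {n}, Psi (n+1) → Psi n) (lift : ∀ {n}, Psi n → Psi (n+1))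
    (bind : ∀ {n}, Psi (n+1) → (ℕ → Tm) → Tm)
    (eps : ∀ {n}, (ℕ → Tm) → Psi n → Prop)
    (P : ∀ n, Psi n → Prop)
    (models : Set Lit → Prop)
    (bbc : ∀ d : Dom, Set Lit → Psi d.numX → Prop)
    (bbr : ∀ d : Dom, Psi d.numX → Set Lit → Psi d.numX → Prop)
    (Airrel : ∀ {n} (ρ ρ' : ℕ → Tm) (σ : Psi n),
      (∀ i < n, ρ i = ρ' i) → eps ρ σ → eps ρ' σ)
    (Aproj : ∀ (d : Dom) (ρ : ℕ → Tm) (t : Tm) (σ : Psi (d.numX + 1)),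
      InstOK d ρ → TmOfDom d t → eps (extend ρ d.numX t) σ → eps ρ (proj σ))
    (Aeps : ∀ (d : Dom) (ρ : ℕ → Tm) (σ : Psi (d.numX + 1)), InstOK d ρ →
      eps ρ (proj σ) → eps (extend ρ d.numX (bind σ ρ)) σ)
    (Abind : ∀ (d : Dom) (ρ : ℕ → Tm) (σ : Psi (d.numX + 1)), InstOK d ρ →
      TmOfDom d (bind σ ρ))
    (Ameet : ∀ {n} (ρ : ℕ → Tm) (σ σ' : Psi n),
      (eps ρ σ ∧ eps ρ σ') ↔ eps ρ (meet σ σ'))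
    (Apg : ∀ (d : Dom) (A : Set Lit),
      (∀ l ∈ A, ∀ t ∈ l.2.2, Tm.VarsBelow d.numE d.numX t) →
      ∀ ρ : ℕ → Tm, InstOK d ρ →
        (models ((Lit.msub ρ) '' A) ↔ ∃ σ : Psi d.numX, bbc d A σ ∧ eps ρ σ))
    (Alift : ∀ (d : Dom) (ρ : ℕ → Tm) (σ : Psi d.numX) (σ' : Psi (d.numX + 1)),
      InstOK d ρ →
      (eps (extend ρ d.numX (bind σ' ρ)) (lift σ) ↔ eps ρ σ))
    (P1 : ∀ (d : Dom) (σ : Psi (d.numX + 1)),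
      P (d.numX + 1) σ ↔ P d.numX (proj σ))
    (P2 : ∀ (d : Dom) (σ σ' : Psi d.numX), P d.numX σ →
      preD Psi (fun ρ τ => eps ρ τ) d σ σ' → P d.numX σ')
    (A1 : ∀ (d : Dom) (A : Set Lit) (σ σ' : Psi d.numX), bbr d σ A σ' →
      ∃ σ'' : Psi d.numX,
        equD Psi (fun ρ τ => eps ρ τ) d σ' (meet σ σ'') ∧
          P d.numX (meet σ σ'') ∧ bbc d A σ'')
    (A2 : ∀ (d : Dom) (A : Set Lit) (σ σ' : Psi d.numX),
      P d.numX (meet σ σ') → bbc d A σ' →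
      ∃ σ'' : Psi d.numX,
        equD Psi (fun ρ τ => eps ρ τ) d σ'' (meet σ σ') ∧
          bbr d σ A σ'') :
    (∀ (Γ : Multiset Fm) (σ σ' : Psi Dom.init.numX), CtxOfDom Dom.init Γ →
      SDI Psi (fun τ => proj τ) (fun τ => lift τ) bbr Dom.init σ Γ σ' →
      eps emptyInst σ' → LK1 models Γ) ∧
    ((∀ (d : Dom) (σc : Psi d.numX),
        P d.numX σc ↔ ∃ ρ : ℕ → Tm, InstOK d ρ ∧ eps ρ σc) →
      ∀ (Γ : Multiset Fm) (σ σ' : Psi Dom.init.numX), CtxOfDom Dom.init Γ →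
        SDI Psi (fun τ => proj τ) (fun τ => lift τ) bbr Dom.init σ Γ σ' →
        LK1 models Γ) := by
  have ctxcons : ∀ (d : Dom) (A : Fm) (Γ : Multiset Fm), FmOfDom d A →
      CtxOfDom d Γ → CtxOfDom d (A ::ₘ Γ) := by
    intro d A Γ hA hΓ C hC
    rcases Multiset.mem_cons.1 hC with rfl | h
    exacts [hA, hΓ _ h]
  have main : ∀ (d : Dom) (σ : Psi d.numX) (Γ : Multiset Fm) (σ' : Psi d.numX),
      SDI Psi (fun τ => proj τ) (fun τ => lift τ) bbr d σ Γ σ' →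
      ∀ ρ : ℕ → Tm, CtxOfDom d Γ → InstOK d ρ → eps ρ σ' →
        eps ρ σ ∧ LK1 models (Γ.map (Fm.msub ρ)) := by
    intro d σ Γ σ' h
    induction h with
    | ax σ Γ σ' hbbr =>
      intro ρ hctx hok heps
      obtain ⟨σ'', hequ, hP, hbbc⟩ := A1 _ _ _ _ hbbr
      have hmeet := hequ.1 ρ hok heps
      have h2 := (Ameet ρ _ _).2 hmeet
      refine ⟨h2.1, ?_⟩
      apply LK1.ax
      rw [lits_map]
      refine (Apg _ (lits Γ) ?_ ρ hok).2 ⟨σ'', hbbc, h2.2⟩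
      intro l hl t ht
      have := hctx _ hl
      cases this with
      | lit _ _ _ h => exact h t ht
    | conj0 h1 h2 ih1 ih2 =>
      intro ρ hctx hok heps
      have hAB := hctx _ (Multiset.mem_cons_self _ _)
      have hΓ : CtxOfDom _ _ := fun C hC => hctx C (Multiset.mem_cons_of_mem hC)
      cases hAB with
      | conj hA hB =>
      obtain ⟨heps'', hLK2⟩ := ih2 ρ (ctxcons _ _ _ hB hΓ) hok heps
      obtain ⟨hepsσ, hLK1⟩ := ih1 ρ (ctxcons _ _ _ hA hΓ) hok heps''
      refine ⟨hepsσ, ?_⟩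
      simp only [Multiset.map_cons, Fm.msub] at hLK1 hLK2 ⊢
      exact LK1.conj hLK1 hLK2
    | conj1 h1 h2 ih1 ih2 =>
      intro ρ hctx hok heps
      have hAB := hctx _ (Multiset.mem_cons_self _ _)
      have hΓ : CtxOfDom _ _ := fun C hC => hctx C (Multiset.mem_cons_of_mem hC)
      cases hAB with
      | conj hA hB =>
      obtain ⟨heps'', hLK2⟩ := ih2 ρ (ctxcons _ _ _ hA hΓ) hok heps
      obtain ⟨hepsσ, hLK1⟩ := ih1 ρ (ctxcons _ _ _ hB hΓ) hok heps''
      refine ⟨hepsσ, ?_⟩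
      simp only [Multiset.map_cons, Fm.msub] at hLK1 hLK2 ⊢
      exact LK1.conj hLK2 hLK1
    | disj h ih =>
      intro ρ hctx hok heps
      have hAB := hctx _ (Multiset.mem_cons_self _ _)
      have hΓ : CtxOfDom _ _ := fun C hC => hctx C (Multiset.mem_cons_of_mem hC)
      cases hAB with
      | disj hA hB =>
      obtain ⟨hepsσ, hLK⟩ := ih ρ (ctxcons _ _ _ hA (ctxcons _ _ _ hB hΓ)) hok heps
      refine ⟨hepsσ, ?_⟩
      simp only [Multiset.map_cons, Fm.msub] at hLK ⊢
      exact LK1.disj hLK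
    | @ex d Γ A σ σ' h ih =>
      intro ρ hctx hok heps
      have hexA := hctx _ (Multiset.mem_cons_self _ _)
      have hA : Fm.VarsBelow d.numE d.numX A := by
        cases hexA with | ex h => exact h
      have hΓ : CtxOfDom d Γ := fun C hC => hctx C (Multiset.mem_cons_of_mem hC)
      have ht : TmOfDom d (bind σ' ρ) := Abind d ρ σ' hok
      have hagree : ∀ i < d.numX, ρ i = extend ρ d.numX (bind σ' ρ) i := by
        intro i hi
        simp only [extend]
        rw [if_neg (by omega)]
      have hok' : InstOK d.addX (extend ρ d.numX (bind σ' ρ)) := by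
        refine ⟨instOK_congr d hagree hok, ?_⟩
        simpa only [extend, if_pos rfl, ite_true] using ht
      have hepsσ' : eps (extend ρ d.numX (bind σ' ρ)) σ' := Aeps d ρ σ' hok heps
      have hctx' : CtxOfDom d.addX (Fm.opn (Tm.mv d.numX) A ::ₘ Fm.ex A ::ₘ Γ) := by
        rw [Fm.opn_id hA]
        refine ctxcons _ _ _ ?_ (ctxcons _ _ _ ?_ ?_)
        · exact Fm.varsBelow_mono hA le_rfl (Nat.le_succ _)
        · exact Fm.varsBelow_mono hexA le_rfl (Nat.le_succ _)
        · intro C hC; exact Fm.varsBelow_mono (hΓ C hC) le_rfl (Nat.le_succ _)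
      obtain ⟨hlift, hLK⟩ := ih (extend ρ d.numX (bind σ' ρ)) hctx' hok' hepsσ'
      have hepsσ : eps ρ σ := (Alift d ρ σ σ' hok).1 hlift
      refine ⟨hepsσ, ?_⟩
      rw [Fm.opn_id hA] at hLK
      simp only [Multiset.map_cons, Fm.msub] at hLK ⊢
      have hAeq : A.msub (extend ρ d.numX (bind σ' ρ)) = A.msub ρ :=
        Fm.msub_congr hA (fun i hi => (hagree i hi).symm)
      have hΓeq : Γ.map (Fm.msub (extend ρ d.numX (bind σ' ρ))) = Γ.map (Fm.msub ρ) :=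
        Multiset.map_congr rfl
          (fun C hC => Fm.msub_congr (hΓ C hC) (fun i hi => (hagree i hi).symm))
      rw [hAeq, hΓeq] at hLK
      have hA' : Fm.VarsBelow d.numE 0 (A.msub ρ) :=
        Fm.msub_varsBelow hA (instOK_varsBelow d hok)
      refine LK1.ex (bind σ' ρ) (Tm.ground_of_varsBelow ht) ?_
      rw [Fm.opn_id hA']
      exact hLK
    | @all d Γ A σ σ' h ih =>
      intro ρ hctx hok heps
      have hallA := hctx _ (Multiset.mem_cons_self _ _)
      have hA : Fm.VarsBelow d.numE d.numX A := by
        cases hallA with | all h => exact h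
      have hΓ : CtxOfDom d Γ := fun C hC => hctx C (Multiset.mem_cons_of_mem hC)
      have hctx' : CtxOfDom d.addE (Fm.opn (Tm.ev d.numE) A ::ₘ Γ) := by
        rw [Fm.opn_id hA]
        refine ctxcons _ _ _ ?_ ?_
        · exact Fm.varsBelow_mono hA (Nat.le_succ _) le_rfl
        · intro C hC; exact Fm.varsBelow_mono (hΓ C hC) (Nat.le_succ _) le_rfl
      obtain ⟨hepsσ, hLK⟩ := ih ρ hctx' hok heps
      refine ⟨hepsσ, ?_⟩
      rw [Fm.opn_id hA] at hLK
      simp only [Multiset.map_cons, Fm.msub] at hLK ⊢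
      have hA' : Fm.VarsBelow d.numE 0 (A.msub ρ) :=
        Fm.msub_varsBelow hA (instOK_varsBelow d hok)
      have hΓ' : ∀ C ∈ Γ.map (Fm.msub ρ), Fm.VarsBelow d.numE 0 C := by
        intro C hC
        rcases Multiset.mem_map.1 hC with ⟨B, hB, rfl⟩
        exact Fm.msub_varsBelow (hΓ B hB) (instOK_varsBelow d hok)
      refine LK1.all d.numE ?_ ?_
      · intro B hB hEv
        rcases Multiset.mem_cons.1 hB with rfl | hB'
        · exact absurd (Fm.hasEv_lt hEv (Fm.VarsBelow.all hA')) (lt_irrefl _)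
        · exact absurd (Fm.hasEv_lt hEv (hΓ' B hB')) (lt_irrefl _)
      · rw [Fm.opn_id hA']
        exact hLK
  have psat : ∀ (d : Dom) (σ : Psi d.numX) (Γ : Multiset Fm) (σ' : Psi d.numX),
      SDI Psi (fun τ => proj τ) (fun τ => lift τ) bbr d σ Γ σ' → P d.numX σ' := by
    intro d σ Γ σ' h
    induction h with
    | ax σ Γ σ' hbbr =>
      obtain ⟨σ'', hequ, hP, _⟩ := A1 _ _ _ _ hbbr
      exact P2 _ _ _ hP hequ.2
    | conj0 _ _ _ ih2 => exact ih2
    | conj1 _ _ _ ih2 => exact ih2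
    | disj _ ih => exact ih
    | ex _ ih => exact (P1 _ _).1 ih
    | all _ ih => exact ih
  have part1 : ∀ (Γ : Multiset Fm) (σ σ' : Psi Dom.init.numX), CtxOfDom Dom.init Γ →
      SDI Psi (fun τ => proj τ) (fun τ => lift τ) bbr Dom.init σ Γ σ' →
      eps emptyInst σ' → LK1 models Γ := by
    intro Γ σ σ' hctx hSDI heps
    have h := (main _ _ _ _ hSDI emptyInst hctx trivial heps).2
    have heq : Γ.map (Fm.msub emptyInst) = Γ := by
      rw [Multiset.map_congr rfl (fun A hA => Fm.msub_id (hctx A hA) emptyInst),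
        Multiset.map_id']
    rwa [heq] at h
  refine ⟨part1, ?_⟩
  intro hPsat Γ σ σ' hctx hSDI
  have hP := psat _ _ _ _ hSDI
  obtain ⟨ρ, -, hρ⟩ := (hPsat Dom.init σ').1 hP
  have heps : eps emptyInst σ' :=
    Airrel ρ emptyInst σ' (fun i hi => absurd hi (Nat.not_lt_zero i)) hρ
  exact part1 Γ σ σ' hctx hSDI heps
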